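/- Let F = X + H be a polynomial map from k^n to k^n where every monomial of each component of H has degree at least 2, and suppose JH is strongly nilpotent (with some index p). Then F is a polynomial automorphism: there exists a polynomial map F^{-1} : k^n → k^n with F ∘ F^{-1} = F^{-1} ∘ F = X. -/

import Mathlib

open MvPolynomial

noncomputable def jacEval {k : Type*} [Field k] {n : ℕ}
    (H : Fin n → MvPolynomial (Fin n) k) (x : Fin n → k) : Matrix (Fin n) (Fin n) k :=
  Matrix.of fun i j => MvPolynomial.eval x (MvPolynomial.pderiv j (H i))

universe u

section IntOne

variable {S : Type*} [CommRing S] [Algebra ℚ S]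

/-- Formal integral over `[0,1]` of a polynomial. -/
noncomputable def intOne (P : Polynomial S) : S :=
  P.sum fun m a => (((m : ℚ) + 1)⁻¹) • a

theorem intOne_zero : intOne (0 : Polynomial S) = 0 := Polynomial.sum_zero_index _

theorem intOne_monomial (m : ℕ) (a : S) :
    intOne (Polynomial.monomial m a) = (((m : ℚ) + 1)⁻¹) • a :=
  Polynomial.sum_monomial_index a _ (smul_zero _)

theorem intOne_add (P Q : Polynomial S) : intOne (P + Q) = intOne P + intOne Q :=
  Polynomial.sum_add_index P Q _ (fun _ => smul_zero _) (fun _ b c => smul_add _ b c)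

theorem intOne_sum {ι : Type*} (s : Finset ι) (f : ι → Polynomial S) :
    intOne (∑ x ∈ s, f x) = ∑ x ∈ s, intOne (f x) :=
  map_sum (AddMonoidHom.mk' intOne intOne_add) f s

theorem intOne_C_mul (s : S) (P : Polynomial S) :
    intOne (Polynomial.C s * P) = s * intOne P := by
  induction P using Polynomial.induction_on' with
  | add p q hp hq => rw [mul_add, intOne_add, intOne_add, hp, hq, mul_add]
  | monomial m a =>
      rw [Polynomial.C_mul_monomial, intOne_monomial, intOne_monomial, mul_smul_comm]

theorem intOne_mul_C (s : S) (P : Polynomial S) :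
    intOne (P * Polynomial.C s) = intOne P * s := by
  rw [mul_comm, intOne_C_mul, mul_comm]

theorem intOne_derivative (Q : Polynomial S) :
    intOne (Polynomial.derivative Q) = Q.eval 1 - Q.eval 0 := by
  induction Q using Polynomial.induction_on' with
  | add p q hp hq =>
      rw [map_add, intOne_add, hp, hq, Polynomial.eval_add, Polynomial.eval_add]; ring
  | monomial m a =>
      rw [Polynomial.derivative_monomial]
      cases m with
      | zero => simpa using intOne_zero (S := S)
      | succ j =>
          rw [Nat.add_sub_cancel, intOne_monomial, Polynomial.eval_monomial,
            Polynomial.eval_monomial, one_pow, zero_pow (Nat.succ_ne_zero j), mul_zero,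
            mul_one, sub_zero]
          have h1 : a * ((j + 1 : ℕ) : S) = ((j : ℚ) + 1) • a := by
            rw [Algebra.smul_def, map_add, map_natCast, map_one]
            push_cast; ring
          rw [h1, smul_smul, inv_mul_cancel₀ (by positivity),
            one_smul]

theorem intOne_map {S' : Type*} [CommRing S'] [Algebra ℚ S'] (ψ : S →+* S') (P : Polynomial S) :
    intOne (P.map ψ) = ψ (intOne P) := by
  induction P using Polynomial.induction_on' with
  | add p q hp hq => rw [Polynomial.map_add, intOne_add, hp, hq, intOne_add, map_add]
  | monomial m a =>
      rw [Polynomial.map_monomial, intOne_monomial, intOne_monomial, ← map_rat_smul ψ]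

end IntOne
section Jac

variable {k : Type u} [Field k] [CharZero k] {n : ℕ}

/-- Jacobian matrix of `H` evaluated at a point with coordinates in a `k`-algebra `S`. -/
noncomputable def jacA (H : Fin n → MvPolynomial (Fin n) k) {S : Type*} [CommRing S]
    [Algebra k S] (x : Fin n → S) : Matrix (Fin n) (Fin n) S :=
  Matrix.of fun i j => aeval x (pderiv j (H i))

theorem jacA_algHom (H : Fin n → MvPolynomial (Fin n) k) {S S' : Type*} [CommRing S]
    [Algebra k S] [CommRing S'] [Algebra k S'] (ψ : S →ₐ[k] S') (x : Fin n → S) :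
    jacA H (fun j => ψ (x j)) = (jacA H x).map ψ := by
  refine Matrix.ext fun i j => ?_
  exact (comp_aeval_apply x ψ (pderiv j (H i))).symm

/-- Strong nilpotency extends to points in an arbitrary commutative `k`-algebra. -/
theorem jac_prod_list {p : ℕ} (H : Fin n → MvPolynomial (Fin n) k)
    (hstrong : ∀ X : Fin p → (Fin n → k),
      (List.ofFn fun ℓ : Fin p => jacEval H (X ℓ)).prod = 0)
    (S : Type u) [CommRing S] [Algebra k S] (vs : List (Fin n → S)) (hvs : vs.length = p) :
    (vs.map fun v => jacA H v).prod = 0 := by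
  subst hvs
  -- the universal matrices
  set T := MvPolynomial (Fin vs.length × Fin n) k with hT
  have huniv : (List.ofFn fun ℓ : Fin vs.length =>
      (Matrix.of fun i j => rename (Prod.mk ℓ) (pderiv j (H i)) :
        Matrix (Fin n) (Fin n) T)).prod = 0 := by
    refine Matrix.ext fun i j => ?_
    rw [Matrix.zero_apply]
    apply MvPolynomial.funext
    intro u
    rw [map_zero]
    have h1 := hstrong (fun ℓ j' => u (ℓ, j'))
    have h2 := map_list_prod ((MvPolynomial.eval u).mapMatrix)
      (List.ofFn fun ℓ : Fin vs.length =>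
        (Matrix.of fun i j => rename (Prod.mk ℓ) (pderiv j (H i)) :
          Matrix (Fin n) (Fin n) T))
    rw [List.map_ofFn] at h2
    have h3 : ((List.ofFn fun ℓ : Fin vs.length =>
        (Matrix.of fun i j => rename (Prod.mk ℓ) (pderiv j (H i)) :
          Matrix (Fin n) (Fin n) T)).prod).map (MvPolynomial.eval u) i j = 0 := by
      rw [← RingHom.mapMatrix_apply, h2]
      have h4 : ((MvPolynomial.eval u).mapMatrix ∘ fun ℓ : Fin vs.length =>
          (Matrix.of fun i j => rename (Prod.mk ℓ) (pderiv j (H i)) :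
            Matrix (Fin n) (Fin n) T))
          = fun ℓ : Fin vs.length => jacEval H (fun j' => u (ℓ, j')) := by
        funext ℓ
        refine Matrix.ext fun i' j' => ?_
        simp only [Function.comp_apply, RingHom.mapMatrix_apply, Matrix.map_apply, Matrix.of_apply]
        rw [eval_rename]
        rfl
      rw [h4, h1, Matrix.zero_apply]
    simpa using h3
  -- transfer along aeval
  have := congrArg ((aeval fun q : Fin vs.length × Fin n => vs.get q.1 q.2 :
      T →ₐ[k] S).toRingHom.mapMatrix) huniv
  rw [map_list_prod, List.map_ofFn, map_zero] at this
  have h5 : ((aeval fun q : Fin vs.length × Fin n => vs.get q.1 q.2 :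
      T →ₐ[k] S).toRingHom.mapMatrix ∘ fun ℓ : Fin vs.length =>
        (Matrix.of fun i j => rename (Prod.mk ℓ) (pderiv j (H i)) :
          Matrix (Fin n) (Fin n) T))
      = fun ℓ : Fin vs.length => jacA H (vs.get ℓ) := by
    funext ℓ
    refine Matrix.ext fun i' j' => ?_
    simp only [Function.comp_apply, RingHom.mapMatrix_apply, Matrix.map_apply, Matrix.of_apply,
      AlgHom.toRingHom_eq_coe, RingHom.coe_coe]
    rw [aeval_rename]
    rfl
  rw [h5] at this
  conv_lhs => rw [← List.ofFn_get vs]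
  rw [List.map_ofFn]
  exact this

end Jac
section Chain

set_option linter.unusedSectionVars false

variable {k : Type u} [Field k] [CharZero k] {n : ℕ}

theorem derivative_aeval_sum {S : Type*} [CommRing S] [Algebra k S]
    (g : Fin n → Polynomial S) (q : MvPolynomial (Fin n) k) :
    Polynomial.derivative (aeval g q)
      = ∑ j, aeval g (pderiv j q) * Polynomial.derivative (g j) := by
  induction q using MvPolynomial.induction_on with
  | C a => simp [aeval_C, Polynomial.algebraMap_apply]
  | add q r hq hr => simp only [map_add, hq, hr, add_mul, Finset.sum_add_distrib]
  | mul_X q i hq =>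
      have h1 : ∀ j : Fin n, (aeval g) ((pderiv j) (q * X i)) =
          (aeval g) ((pderiv j) q) * g i + (aeval g) q * (if i = j then 1 else 0) := by
        intro j
        rw [pderiv_mul, map_add, map_mul, map_mul, aeval_X, pderiv_X, Pi.single_apply]
        congr 1
        split <;> simp
      calc Polynomial.derivative (aeval g (q * X i))
          = (∑ j, aeval g (pderiv j q) * Polynomial.derivative (g j)) * g i
              + aeval g q * Polynomial.derivative (g i) := by
            rw [map_mul, aeval_X, Polynomial.derivative_mul, hq]
        _ = ∑ j, (aeval g (pderiv j q) * g i
              + aeval g q * (if i = j then 1 else 0)) * Polynomial.derivative (g j) := by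
            rw [Finset.sum_mul]
            simp only [add_mul, Finset.sum_add_distrib, mul_ite, ite_mul, mul_one, mul_zero,
              zero_mul]
            rw [Finset.sum_ite_eq]
            simp only [Finset.mem_univ, if_true]
            refine congrArg (· + _) ?_
            apply Finset.sum_congr rfl
            intro j _
            ring
        _ = ∑ j, aeval g (pderiv j (q * X i)) * Polynomial.derivative (g j) := by
            apply Finset.sum_congr rfl
            intro j _
            rw [h1 j]

end Chain

section Avg

set_option linter.unusedSectionVars false

variable {k : Type u} [Field k] [CharZero k] {n : ℕ}

/-- The averaged Jacobian matrix along a polynomial path `z`. -/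
noncomputable def avgMat (H : Fin n → MvPolynomial (Fin n) k) {S : Type*} [CommRing S]
    [Algebra ℚ S] [Algebra k S] (z : Fin n → Polynomial S) : Matrix (Fin n) (Fin n) S :=
  Matrix.of fun i j => intOne (aeval z (pderiv j (H i)))

/-- The straight segment from `y` to `x`. -/
noncomputable def seg {S : Type*} [CommRing S] (x y : Fin n → S) : Fin n → Polynomial S :=
  fun j => Polynomial.C (y j) + Polynomial.X * Polynomial.C (x j - y j)

theorem hadamard (H : Fin n → MvPolynomial (Fin n) k) {S : Type*} [CommRing S]
    [Algebra ℚ S] [Algebra k S] (x y : Fin n → S) (i : Fin n) :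
    aeval x (H i) - aeval y (H i)
      = ∑ j, avgMat H (seg x y) i j * (x j - y j) := by
  have heval : ∀ c : S, (Polynomial.aeval c).toRingHom.comp (algebraMap k (Polynomial S))
      = algebraMap k S := by
    intro c
    ext1 a
    simp [Polynomial.algebraMap_apply]
  have hev : ∀ c : S, ∀ P : MvPolynomial (Fin n) k,
      Polynomial.eval c (aeval (seg x y) P)
        = aeval (fun j => y j + c * (x j - y j)) P := by
    intro c P
    have hthis := comp_aeval_apply (seg x y) ((Polynomial.aeval c).restrictScalars k) P
    have hcoe : ∀ Q : Polynomial S,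
        (AlgHom.restrictScalars k (Polynomial.aeval c)) Q = Polynomial.eval c Q := by
      intro Q
      rw [AlgHom.restrictScalars_apply, ← Polynomial.coe_aeval_eq_eval]
    simp only [hcoe] at hthis
    rw [hthis]
    have harg : (fun j => Polynomial.eval c (seg x y j)) = fun j => y j + c * (x j - y j) := by
      funext j
      simp [seg]
    rw [harg]
  have e1 : Polynomial.eval 1 (aeval (seg x y) (H i)) = aeval x (H i) := by
    rw [hev]
    have : (fun j => y j + 1 * (x j - y j)) = x := by funext j; ring
    rw [this]
  have e0 : Polynomial.eval 0 (aeval (seg x y) (H i)) = aeval y (H i) := by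
    rw [hev]
    have : (fun j => y j + 0 * (x j - y j)) = y := by funext j; ring
    rw [this]
  have e3 : Polynomial.derivative (aeval (seg x y) (H i))
      = ∑ j, aeval (seg x y) (pderiv j (H i)) * Polynomial.C (x j - y j) := by
    rw [derivative_aeval_sum]
    apply Finset.sum_congr rfl
    intro j _
    congr 1
    simp [seg]
  have e2 := intOne_derivative (aeval (seg x y) (H i))
  rw [e1, e0] at e2
  rw [← e2, e3, intOne_sum]
  apply Finset.sum_congr rfl
  intro j _
  rw [intOne_mul_C]
  rfl

end Avg
section Mixed

set_option linter.unusedSectionVars false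

variable {k : Type u} [Field k] [CharZero k] {n : ℕ}

theorem intOne_matrix_conj {S : Type*} [CommRing S] [Algebra ℚ S]
    (E A : Matrix (Fin n) (Fin n) S) (N : Matrix (Fin n) (Fin n) (Polynomial S)) :
    (Matrix.of fun i j =>
        intOne (((Polynomial.C : S →+* Polynomial S).mapMatrix E * N *
          (Polynomial.C : S →+* Polynomial S).mapMatrix A) i j))
      = E * (Matrix.of fun i j => intOne (N i j)) * A := by
  refine Matrix.ext fun i j => ?_
  simp only [Matrix.of_apply, Matrix.mul_apply, RingHom.mapMatrix_apply, Matrix.map_apply]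
  rw [show (∑ b, (∑ a, Polynomial.C (E i a) * N a b) * Polynomial.C (A b j))
      = ∑ b, ∑ a, Polynomial.C (E i a) * N a b * Polynomial.C (A b j) by
    apply Finset.sum_congr rfl; intro b _; rw [Finset.sum_mul]]
  rw [intOne_sum]
  apply Finset.sum_congr rfl
  intro b _
  rw [intOne_sum, Finset.sum_mul]
  apply Finset.sum_congr rfl
  intro a _
  rw [mul_assoc, intOne_C_mul, intOne_mul_C, mul_assoc]

theorem mixed_prod_eq_zero {p : ℕ} (H : Fin n → MvPolynomial (Fin n) k)
    (hstrong : ∀ X : Fin p → (Fin n → k),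
      (List.ofFn fun ℓ : Fin p => jacEval H (X ℓ)).prod = 0) (m : ℕ) :
    ∀ (S : Type u) [CommRing S] [Algebra ℚ S] [Algebra k S]
      (vs : List (Fin n → S)) (zs : List (Fin n → Polynomial S)),
      vs.length + zs.length = p → zs.length = m →
      (vs.map fun v => jacA H v).prod * (zs.map fun z => avgMat H z).prod = 0 := by
  induction m with
  | zero =>
      intro S _ _ _ vs zs hlen hm
      have hzs : zs = [] := List.length_eq_zero_iff.mp hm
      subst hzs
      simp only [List.map_nil, List.prod_nil, mul_one]
      exact jac_prod_list H hstrong S vs (by simpa using hlen)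
  | succ m ih =>
      intro S _ _ _ vs zs hlen hm
      obtain ⟨z, zs', rfl⟩ : ∃ z zs', zs = z :: zs' := by
        cases zs with
        | nil => simp at hm
        | cons z zs' => exact ⟨z, zs', rfl⟩
      have hm' : zs'.length = m := by simpa using hm
      set E : Matrix (Fin n) (Fin n) S := (vs.map fun v => jacA H v).prod with hE
      set A : Matrix (Fin n) (Fin n) S := (zs'.map fun w => avgMat H w).prod with hA
      -- apply the induction hypothesis over `Polynomial S`
      have key := ih (Polynomial S)
        ((vs.map fun v => fun j => Polynomial.C (v j)) ++ [z])
        (zs'.map fun w => fun j => (w j).map (Polynomial.C : S →+* Polynomial S))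
        (by simp only [List.length_append, List.length_map, List.length_singleton] at hlen ⊢
            omega)
        (by simpa using hm')
      -- identify the three factors in `key`
      have hCalg : ∀ (s : S), (Polynomial.CAlgHom : S →ₐ[k] Polynomial S) s = Polynomial.C s :=
        fun s => rfl
      have fact1 : (((vs.map fun v => fun j => Polynomial.C (v j)) ++ [z]).map
          fun v => jacA H v).prod
          = (Polynomial.C : S →+* Polynomial S).mapMatrix E * jacA H z := by
        rw [List.map_append, List.prod_append]
        simp only [List.map_cons, List.map_nil, List.prod_cons, List.prod_nil, mul_one]
        congr 1
        rw [hE, map_list_prod, List.map_map, List.map_map]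
        refine congrArg List.prod (List.map_congr_left fun v _ => ?_)
        simp only [Function.comp_apply, RingHom.mapMatrix_apply]
        have := jacA_algHom H (Polynomial.CAlgHom : S →ₐ[k] Polynomial S) v
        exact this
      have fact2 : ((zs'.map fun w => fun j =>
            (w j).map (Polynomial.C : S →+* Polynomial S)).map fun w => avgMat H w).prod
          = (Polynomial.C : S →+* Polynomial S).mapMatrix A := by
        rw [hA, map_list_prod, List.map_map, List.map_map]
        refine congrArg List.prod (List.map_congr_left fun w _ => ?_)
        simp only [Function.comp_apply, RingHom.mapMatrix_apply]
        refine Matrix.ext fun i j => ?_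
        simp only [avgMat, Matrix.of_apply, Matrix.map_apply]
        have hmap : aeval (fun j' => (w j').map (Polynomial.C : S →+* Polynomial S))
            (pderiv j (H i))
            = (aeval w (pderiv j (H i))).map (Polynomial.C : S →+* Polynomial S) := by
          have := comp_aeval_apply w
            (Polynomial.mapAlgHom (Polynomial.CAlgHom : S →ₐ[k] Polynomial S))
            (pderiv j (H i))
          have hco : ∀ Q : Polynomial S,
              (Polynomial.mapAlgHom (Polynomial.CAlgHom : S →ₐ[k] Polynomial S)) Q
              = Q.map (Polynomial.C : S →+* Polynomial S) := fun Q => rfl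
          simp only [hco] at this
          exact this.symm
        rw [hmap, intOne_map]
      rw [fact1, fact2] at key
      -- integrate the identity `key`
      have key2 := congrArg (fun M : Matrix (Fin n) (Fin n) (Polynomial S) =>
        (Matrix.of fun i j => intOne (M i j))) key
      rw [intOne_matrix_conj] at key2
      have hz : (Matrix.of fun i j => intOne ((jacA H z) i j)) = avgMat H z := rfl
      rw [hz] at key2
      have hzero : (Matrix.of fun i j =>
          intOne ((0 : Matrix (Fin n) (Fin n) (Polynomial S)) i j)) = 0 := by
        refine Matrix.ext fun i j => ?_
        simp [intOne_zero]
      rw [hzero] at key2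
      calc E * ((z :: zs').map fun w => avgMat H w).prod
          = E * (avgMat H z * A) := by rw [List.map_cons, List.prod_cons, hA]
        _ = E * avgMat H z * A := by rw [mul_assoc]
        _ = 0 := key2

end Mixed
/-- If `F = X + H` where every monomial of `H` has degree at least two and `JH` is strongly
nilpotent (with some index `p`), then `F` is a polynomial automorphism: there is a polynomial
map `Finv` with `F ∘ Finv = Finv ∘ F = X`. -/
theorem strongly_nilpotent_is_automorphism
    {k : Type*} [Field k] [CharZero k] {n : ℕ} (p : ℕ)
    (H : Fin n → MvPolynomial (Fin n) k)
    (hH2 : ∀ i (β : Fin n →₀ ℕ), (β.sum fun _ m => m) < 2 → MvPolynomial.coeff β (H i) = 0)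
    (hstrong : ∀ X : Fin p → (Fin n → k),
      (List.ofFn fun ℓ : Fin p => jacEval H (X ℓ)).prod = 0) :
    ∃ Finv : Fin n → MvPolynomial (Fin n) k,
      (∀ i, MvPolynomial.aeval Finv (MvPolynomial.X i + H i) = MvPolynomial.X i) ∧
      (∀ i, MvPolynomial.aeval (fun j => MvPolynomial.X j + H j) (Finv i)
        = MvPolynomial.X i) := by
  classical
  -- the Picard iteration `G 0 = X`, `G (m+1) = X - H ∘ G m`
  let G : ℕ → Fin n → MvPolynomial (Fin n) k :=
    fun m => Nat.rec (fun i => X i) (fun _ prev i => X i - aeval prev (H i)) m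
  have hGsucc : ∀ m i, G (m + 1) i = X i - aeval (G m) (H i) := fun m i => rfl
  have hrec : ∀ m, (fun i => G (m + 1 + 1) i - G (m + 1) i)
      = -((avgMat H (seg (G m) (G (m + 1)))).mulVec fun i => G (m + 1) i - G m i) := by
    intro m
    funext i
    have hh := hadamard H (G m) (G (m + 1)) i
    have h2 : G (m + 1 + 1) i - G (m + 1) i = aeval (G m) (H i) - aeval (G (m + 1)) (H i) := by
      rw [hGsucc (m + 1) i, hGsucc m i]; ring
    rw [h2, hh]
    simp only [Pi.neg_apply, Matrix.mulVec, dotProduct]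
    rw [← Finset.sum_neg_distrib]
    apply Finset.sum_congr rfl
    intro j _
    ring
  have claim : ∀ m, ∃ zs : List (Fin n → Polynomial (MvPolynomial (Fin n) k)),
      zs.length = m ∧ (fun i => G (m + 1) i - G m i)
        = ((-1 : MvPolynomial (Fin n) k) ^ m) •
            ((zs.map fun z => avgMat H z).prod).mulVec (fun i => G 1 i - G 0 i) := by
    intro m
    induction m with
    | zero => exact ⟨[], rfl, by simp [Matrix.one_mulVec]⟩
    | succ m ih =>
        obtain ⟨zs, hlen, hD⟩ := ih
        refine ⟨seg (G m) (G (m + 1)) :: zs, by simp [hlen], ?_⟩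
        rw [hrec m, hD, Matrix.mulVec_smul, Matrix.mulVec_mulVec, List.map_cons,
          List.prod_cons, pow_succ, mul_neg_one, neg_smul]
  obtain ⟨zs, hlen, hDp⟩ := claim p
  have hzs0 : ((zs.map fun z => avgMat H z).prod) = 0 := by
    have := mixed_prod_eq_zero H hstrong p (MvPolynomial (Fin n) k) [] zs
      (by simp [hlen]) hlen
    simpa using this
  have hfix : ∀ i, X i - aeval (G p) (H i) = G p i := by
    intro i
    have h1 := congrFun hDp i
    rw [hzs0] at h1
    simp only [Matrix.zero_mulVec, Pi.smul_apply, Pi.zero_apply, smul_zero] at h1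
    rw [← hGsucc p i]
    linear_combination h1
  refine ⟨G p, fun i => ?_, fun i => ?_⟩
  · rw [map_add, aeval_X]
    linear_combination -hfix i
  · -- the other composition
    have hWi : ∀ i, aeval (fun j => X j + H j) (G p i)
        = X i + H i - aeval (fun j => aeval (fun j' => X j' + H j') (G p j)) (H i) := by
      intro i
      have h1 : G p i = X i - aeval (G p) (H i) := (hfix i).symm
      calc aeval (fun j => X j + H j) (G p i)
          = aeval (fun j => X j + H j) (X i - aeval (G p) (H i)) := by rw [← h1]
        _ = (X i + H i) - aeval (fun j => X j + H j) (aeval (G p) (H i)) := by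
            rw [map_sub, aeval_X]
        _ = X i + H i - aeval (fun j => aeval (fun j' => X j' + H j') (G p j)) (H i) := by
            rw [comp_aeval_apply (G p) (aeval (fun j => X j + H j) :
              MvPolynomial (Fin n) k →ₐ[k] MvPolynomial (Fin n) k) (H i)]
    set W : Fin n → MvPolynomial (Fin n) k :=
      fun j => aeval (fun j' => X j' + H j') (G p j) with hW
    set Evec : Fin n → MvPolynomial (Fin n) k := fun i => W i - X i with hEvec
    set Amat := avgMat H (seg (fun j => (X j : MvPolynomial (Fin n) k)) W) with hAmat
    have hE : Evec = -(Amat.mulVec Evec) := by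
      funext i
      have hh := hadamard H (fun j => (X j : MvPolynomial (Fin n) k)) W i
      have hXH : aeval (fun j => (X j : MvPolynomial (Fin n) k)) (H i) = H i :=
        aeval_X_left_apply (H i)
      rw [hXH] at hh
      have h3 : Evec i = H i - aeval W (H i) := by
        have := hWi i
        simp only [hEvec]
        rw [hW]
        simp only []
        linear_combination this
      rw [h3, hh, ← hAmat]
      simp only [Pi.neg_apply, Matrix.mulVec, dotProduct]
      rw [← Finset.sum_neg_distrib]
      apply Finset.sum_congr rfl
      intro j _
      simp only [hEvec]
      ring
    have hiter : ∀ m, Evec = ((-1 : MvPolynomial (Fin n) k) ^ m) • ((Amat ^ m).mulVec Evec) := by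
      intro m
      induction m with
      | zero => simp [Matrix.one_mulVec]
      | succ m ih =>
          calc Evec = ((-1 : MvPolynomial (Fin n) k) ^ m) • ((Amat ^ m).mulVec Evec) := ih
            _ = ((-1 : MvPolynomial (Fin n) k) ^ m) •
                  ((Amat ^ m).mulVec (-(Amat.mulVec Evec))) := by rw [← hE]
            _ = ((-1 : MvPolynomial (Fin n) k) ^ (m + 1)) • ((Amat ^ (m + 1)).mulVec Evec) := by
                rw [Matrix.mulVec_neg, Matrix.mulVec_mulVec, smul_neg, ← neg_smul,
                  pow_succ, pow_succ, mul_neg_one]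
    have hA0 : Amat ^ p = 0 := by
      have := mixed_prod_eq_zero H hstrong p (MvPolynomial (Fin n) k) []
        (List.replicate p (seg (fun j => (X j : MvPolynomial (Fin n) k)) W))
        (by simp) (by simp)
      simpa [List.map_replicate, List.prod_replicate, hAmat] using this
    have hE0 : Evec = 0 := by
      have h4 := hiter p
      rw [hA0] at h4
      simpa [Matrix.zero_mulVec] using h4
    have h5 := congrFun hE0 i
    simp only [hEvec, Pi.zero_apply, hW] at h5
    linear_combination h5
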